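/- Let γ_p(ρ) = a t ρ/(b t ρ + c) and γ_c(ρ) = a'(1−t)ρ/(b t ρ + c) with constants a, a', b, c > 0 and t = t(ρ) = min{K/(ρȲ), 1} for constants K, Ȳ > 0. Then as ρ → ∞, t(ρ)ρ → K/Ȳ, γ_p(ρ) converges to a finite limit, while γ_c(ρ) → ∞; consequently log₂(1+γ_p) + log₂(1+γ_c) → ∞, i.e., the RS sum rate is unbounded in ρ. -/

import Mathlib

open Filter Topology

theorem stmt_6 (a a' b c K Y : ℝ) (ha : 0 < a) (ha' : 0 < a') (hb : 0 < b)
    (hc : 0 < c) (hK : 0 < K) (hY : 0 < Y)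
    (t : ℝ → ℝ) (ht : ∀ ρ, t ρ = min (K / (ρ * Y)) 1)
    (γp γc : ℝ → ℝ)
    (hγp : ∀ ρ, γp ρ = a * t ρ * ρ / (b * t ρ * ρ + c))
    (hγc : ∀ ρ, γc ρ = a' * (1 - t ρ) * ρ / (b * t ρ * ρ + c)) :
    Tendsto (fun ρ => t ρ * ρ) atTop (𝓝 (K / Y)) ∧
    (∃ L : ℝ, Tendsto γp atTop (𝓝 L)) ∧
    Tendsto γc atTop atTop ∧
    Tendsto (fun ρ => Real.logb 2 (1 + γp ρ) + Real.logb 2 (1 + γc ρ))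
      atTop atTop := by
  have hD : 0 < b * (K / Y) + c := by positivity
  -- eventually t ρ * ρ = K / Y
  have hev : ∀ᶠ ρ in atTop, t ρ * ρ = K / Y := by
    filter_upwards [eventually_ge_atTop (max (K / Y) 1)] with ρ hρ
    have h1 : (1:ℝ) ≤ ρ := le_trans (le_max_right _ _) hρ
    have hρ0 : 0 < ρ := lt_of_lt_of_le one_pos h1
    have hKY : K / Y ≤ ρ := le_trans (le_max_left _ _) hρ
    have hmin : K / (ρ * Y) ≤ 1 := by
      rw [div_le_one (by positivity)]
      calc K = (K / Y) * Y := by field_simp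
        _ ≤ ρ * Y := by nlinarith
    rw [ht ρ, min_eq_left hmin]
    field_simp
  have htρ : Tendsto (fun ρ => t ρ * ρ) atTop (𝓝 (K / Y)) :=
    Tendsto.congr' (hev.mono fun ρ h => h.symm) tendsto_const_nhds
  -- γp eventually constant
  set L : ℝ := a * (K / Y) / (b * (K / Y) + c) with hL
  have hevp : ∀ᶠ ρ in atTop, γp ρ = L := by
    filter_upwards [hev] with ρ h
    rw [hγp ρ, mul_assoc, mul_assoc, h]
  have hγpL : Tendsto γp atTop (𝓝 L) :=
    Tendsto.congr' (hevp.mono fun ρ h => h.symm) tendsto_const_nhds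
  -- γc eventually equals a' * (ρ - K/Y) / D
  have hevc : ∀ᶠ ρ in atTop, a' * (ρ - K / Y) / (b * (K / Y) + c) = γc ρ := by
    filter_upwards [hev] with ρ h
    rw [hγc ρ, show a' * (1 - t ρ) * ρ = a' * (ρ - t ρ * ρ) by ring, mul_assoc b, h]
  have hγcT : Tendsto γc atTop atTop := by
    refine Tendsto.congr' hevc ?_
    exact Tendsto.atTop_div_const hD
      ((tendsto_atTop_add_const_right atTop (-(K / Y)) tendsto_id).const_mul_atTop ha')
  refine ⟨htρ, ⟨L, hγpL⟩, hγcT, ?_⟩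
  -- log sum
  have hlogc : Tendsto (fun ρ => Real.logb 2 (1 + γc ρ)) atTop atTop :=
    (Real.tendsto_logb_atTop one_lt_two).comp
      (tendsto_atTop_add_const_left atTop 1 hγcT)
  have hconst : Tendsto (fun ρ => Real.logb 2 (1 + L) + Real.logb 2 (1 + γc ρ))
      atTop atTop := tendsto_atTop_add_const_left atTop _ hlogc
  refine Tendsto.congr' ?_ hconst
  filter_upwards [hevp] with ρ h
  rw [h]
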